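/- Let G be a finite additive abelian group with |G| = d ≥ 2 and let n, k ≥ 1. Let p be a comb of order n and q a comb of order k. Let S : ZMod (d^n) → G be a de Bruijn sequence for the comb p over G, and let Q : ZMod (d^(k-1)) → G be a quotient string for the comb q over G. Let B be a block pattern with |B| = n + k - 1 such that the set of columns occupied by B equals the image of p, the set of rows occupied by B equals the image of q, and the connection graph of B contains a cycle (i.e. is not acyclic). Then in the grid T : ZMod (d^(k-1)) × ZMod (d^n) → G defined by T(i,j) = S(j) + Q(i), there exists a filling f : B → G that occurs at no position (i,j). -/

import Mathlib

/-- A comb of order `m`: a strictly increasing function `Fin m → ℕ` starting at `0`. -/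
def IsComb (m : ℕ) (p : Fin m → ℕ) : Prop :=
  StrictMono p ∧ ∀ h : 0 < m, p ⟨0, h⟩ = 0

/-- The connection graph of a block pattern `B`: two distinct cells are adjacent iff they
lie in the same row with no cell of `B` strictly between them in that row, or in the same
column with no cell of `B` strictly between them in that column. -/
def connectionGraph (B : Finset (ℕ × ℕ)) : SimpleGraph {x // x ∈ B} :=
  SimpleGraph.fromRel (fun a b =>
    (a.1.1 = b.1.1 ∧ ∀ x ∈ B, x.1 = a.1.1 →
        ¬(min a.1.2 b.1.2 < x.2 ∧ x.2 < max a.1.2 b.1.2)) ∨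
    (a.1.2 = b.1.2 ∧ ∀ x ∈ B, x.2 = a.1.2 →
        ¬(min a.1.1 b.1.1 < x.1 ∧ x.1 < max a.1.1 b.1.1)))

open SimpleGraph in
lemma aux_adj_iff {B : Finset (ℕ × ℕ)} (a b : {x // x ∈ B}) :
    (connectionGraph B).Adj a b ↔ a ≠ b ∧
      ((a.1.1 = b.1.1 ∧ ∀ x ∈ B, x.1 = a.1.1 →
          ¬(min a.1.2 b.1.2 < x.2 ∧ x.2 < max a.1.2 b.1.2)) ∨
       (a.1.2 = b.1.2 ∧ ∀ x ∈ B, x.2 = a.1.2 →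
          ¬(min a.1.1 b.1.1 < x.1 ∧ x.1 < max a.1.1 b.1.1))) := by
  rw [connectionGraph, SimpleGraph.fromRel_adj]
  refine and_congr_right fun hne => ⟨?_, fun h => Or.inl h⟩
  rintro (h | h)
  · exact h
  · rcases h with ⟨hr, hx⟩ | ⟨hc, hx⟩
    · refine Or.inl ⟨hr.symm, fun x hxB hxr => ?_⟩
      rw [min_comm, max_comm]
      exact hx x hxB (by rw [hxr, hr])
    · refine Or.inr ⟨hc.symm, fun x hxB hxr => ?_⟩
      rw [min_comm, max_comm]
      exact hx x hxB (by rw [hxr, hc])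

lemma aux_row_succ_unique {B : Finset (ℕ × ℕ)} {a b b' : {x // x ∈ B}}
    (h1 : (connectionGraph B).Adj a b) (h2 : (connectionGraph B).Adj a b')
    (hr : a.1.1 = b.1.1) (hr' : a.1.1 = b'.1.1)
    (hlt : a.1.2 < b.1.2) (hlt' : a.1.2 < b'.1.2) : b = b' := by
  rw [aux_adj_iff] at h1 h2
  rcases h1.2 with ⟨-, hx⟩ | ⟨hc, -⟩
  swap
  · omega
  rcases h2.2 with ⟨-, hx'⟩ | ⟨hc', -⟩
  swap
  · omega
  rcases lt_trichotomy b.1.2 b'.1.2 with h | h | h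
  · exfalso
    refine hx' b.1 b.2 hr.symm ?_
    rw [Nat.min_eq_left hlt'.le, Nat.max_eq_right hlt'.le]
    omega
  · exact Subtype.ext (Prod.ext (by omega) h)
  · exfalso
    refine hx b'.1 b'.2 hr'.symm ?_
    rw [Nat.min_eq_left hlt.le, Nat.max_eq_right hlt.le]
    omega

lemma aux_col_succ_unique {B : Finset (ℕ × ℕ)} {a b b' : {x // x ∈ B}}
    (h1 : (connectionGraph B).Adj a b) (h2 : (connectionGraph B).Adj a b')
    (hr : a.1.2 = b.1.2) (hr' : a.1.2 = b'.1.2)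
    (hlt : a.1.1 < b.1.1) (hlt' : a.1.1 < b'.1.1) : b = b' := by
  rw [aux_adj_iff] at h1 h2
  rcases h1.2 with ⟨hc, -⟩ | ⟨-, hx⟩
  · omega
  rcases h2.2 with ⟨hc', -⟩ | ⟨-, hx'⟩
  · omega
  rcases lt_trichotomy b.1.1 b'.1.1 with h | h | h
  · exfalso
    refine hx' b.1 b.2 hr.symm ?_
    rw [Nat.min_eq_left hlt'.le, Nat.max_eq_right hlt'.le]
    omega
  · exact Subtype.ext (Prod.ext h (by omega))
  · exfalso
    refine hx b'.1 b'.2 hr'.symm ?_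
    rw [Nat.min_eq_left hlt.le, Nat.max_eq_right hlt.le]
    omega

lemma aux_card_rowmax {B : Finset (ℕ × ℕ)} :
    (B.filter (fun c => ∀ x ∈ B, x.1 = c.1 → x.2 ≤ c.2)).card = (B.image Prod.fst).card := by
  classical
  have h1 : (B.filter (fun c => ∀ x ∈ B, x.1 = c.1 → x.2 ≤ c.2)).image Prod.fst
      = B.image Prod.fst := by
    apply Finset.Subset.antisymm
    · exact Finset.image_subset_image (Finset.filter_subset _ _)
    · intro r hr
      obtain ⟨c, hcB, rfl⟩ := Finset.mem_image.1 hr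
      obtain ⟨m, hm, hmax⟩ := Finset.exists_max_image (B.filter (fun x => x.1 = c.1)) Prod.snd
        ⟨c, Finset.mem_filter.2 ⟨hcB, rfl⟩⟩
      rcases Finset.mem_filter.1 hm with ⟨hmB, hmr⟩
      refine Finset.mem_image.2 ⟨m, Finset.mem_filter.2 ⟨hmB, fun x hx hxr => ?_⟩, hmr⟩
      exact hmax x (Finset.mem_filter.2 ⟨hx, by rw [hxr, hmr]⟩)
  rw [← h1]
  rw [Finset.card_image_of_injOn]
  intro c hc c' hc' hcc
  rcases Finset.mem_filter.1 hc with ⟨hcB, hcm⟩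
  rcases Finset.mem_filter.1 hc' with ⟨hcB', hcm'⟩
  have l1 := hcm' c hcB hcc
  have l2 := hcm c' hcB' hcc.symm
  exact Prod.ext hcc (le_antisymm l1 l2)

lemma aux_card_colmax {B : Finset (ℕ × ℕ)} :
    (B.filter (fun c => ∀ x ∈ B, x.2 = c.2 → x.1 ≤ c.1)).card = (B.image Prod.snd).card := by
  classical
  have h1 : (B.filter (fun c => ∀ x ∈ B, x.2 = c.2 → x.1 ≤ c.1)).image Prod.snd
      = B.image Prod.snd := by
    apply Finset.Subset.antisymm
    · exact Finset.image_subset_image (Finset.filter_subset _ _)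
    · intro r hr
      obtain ⟨c, hcB, rfl⟩ := Finset.mem_image.1 hr
      obtain ⟨m, hm, hmax⟩ := Finset.exists_max_image (B.filter (fun x => x.2 = c.2)) Prod.fst
        ⟨c, Finset.mem_filter.2 ⟨hcB, rfl⟩⟩
      rcases Finset.mem_filter.1 hm with ⟨hmB, hmr⟩
      refine Finset.mem_image.2 ⟨m, Finset.mem_filter.2 ⟨hmB, fun x hx hxr => ?_⟩, hmr⟩
      exact hmax x (Finset.mem_filter.2 ⟨hx, by rw [hxr, hmr]⟩)
  rw [← h1]
  rw [Finset.card_image_of_injOn]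
  intro c hc c' hc' hcc
  rcases Finset.mem_filter.1 hc with ⟨hcB, hcm⟩
  rcases Finset.mem_filter.1 hc' with ⟨hcB', hcm'⟩
  have l1 := hcm' c hcB hcc
  have l2 := hcm c' hcB' hcc.symm
  exact Prod.ext (le_antisymm l1 l2) hcc

open SimpleGraph


lemma aux_connected_card_le {V : Type*} [Fintype V] {G : SimpleGraph V} [Fintype G.edgeSet]
    (h : G.Connected) : Fintype.card V ≤ G.edgeFinset.card + 1 := by
  classical
  have hne := h.nonempty
  inhabit V
  set r := (default : V) with hr
  choose w hw using fun v => (h v r).exists_walk_length_eq_dist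
  have hnil : ∀ v : V, v ≠ r → ¬ (w v).Nil := by
    intro v hv hnl
    have := (h.pos_dist_of_ne hv : 0 < G.dist v r)
    rw [← hw v] at this
    rw [SimpleGraph.Walk.nil_iff_length_eq.1 hnl] at this
    omega
  have hdistlt : ∀ v : V, v ≠ r → G.dist ((w v).getVert 1) r < G.dist v r := by
    intro v hv
    have h1 : G.dist ((w v).getVert 1) r ≤ ((w v).tail).length := SimpleGraph.dist_le _
    have h2 : ((w v).tail).length + 1 = (w v).length :=
      SimpleGraph.Walk.length_tail_add_one (hnil v hv)
    have := hw v
    omega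
  have key : ({r}ᶜ : Finset V).card ≤ G.edgeFinset.card := by
    apply Finset.card_le_card_of_injOn
      (fun v => if hv : (w v).Nil then s(v, v) else ((w v).firstDart hv).edge)
    · intro v hv
      simp only [Finset.mem_coe, Finset.mem_compl, Finset.mem_singleton] at hv
      show (if hv : (w v).Nil then s(v, v) else ((w v).firstDart hv).edge) ∈ G.edgeFinset
      rw [dif_neg (hnil v hv)]
      exact SimpleGraph.mem_edgeFinset.2 (((w v).firstDart (hnil v hv)).edge_mem)
    · intro v hv v' hv' he
      simp only [Finset.mem_coe, Finset.mem_compl, Finset.mem_singleton] at hv hv'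
      simp only [dif_neg (hnil v hv), dif_neg (hnil v' hv')] at he
      rw [SimpleGraph.dart_edge_eq_iff] at he
      rcases he with he | he
      · exact congrArg (fun d => d.fst) he
      · have h1 : v = ((w v').firstDart (hnil v' hv')).snd := congrArg (fun d => d.fst) he
        have h2 : ((w v).firstDart (hnil v hv)).snd = v' := congrArg (fun d => d.snd) he
        simp only [SimpleGraph.Walk.firstDart_toProd] at h1 h2
        have d1 := hdistlt v hv
        have d2 := hdistlt v' hv'
        rw [show (w v).getVert 1 = v' from h2] at d1
        rw [show (w v').getVert 1 = v from h1.symm] at d2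
        omega
  have : ({r}ᶜ : Finset V).card = Fintype.card V - 1 := by
    rw [Finset.card_compl, Finset.card_singleton]
  have hpos : 0 < Fintype.card V := Fintype.card_pos
  omega


lemma aux_reach_del {V : Type*} {G : SimpleGraph V} {v w : V}
    (hr : (G \ fromEdgeSet {s(v, w)}).Reachable v w)
    {a b : V} (p : G.Walk a b) : (G \ fromEdgeSet {s(v, w)}).Reachable a b := by
  induction p with
  | nil => exact Reachable.refl _
  | @cons x y z h q ih =>
    refine Reachable.trans ?_ ih
    by_cases he : s(x, y) = s(v, w)
    · rw [Sym2.eq_iff] at he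
      rcases he with ⟨rfl, rfl⟩ | ⟨rfl, rfl⟩
      · exact hr
      · exact hr.symm
    · refine SimpleGraph.Adj.reachable ?_
      rw [SimpleGraph.sdiff_adj, SimpleGraph.fromEdgeSet_adj]
      refine ⟨h, ?_⟩
      rintro ⟨hmem, -⟩
      exact he (Set.mem_singleton_iff.1 hmem)

lemma aux_card_le_of_cycle {V : Type*} [Fintype V] {G : SimpleGraph V} [Fintype G.edgeSet]
    (hconn : G.Connected) {u : V} {c : G.Walk u u} (hc : c.IsCycle) :
    Fintype.card V ≤ G.edgeFinset.card := by
  classical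
  have hlen : c.edges ≠ [] := by
    intro h
    have := hc.three_le_length
    have : c.edges.length = c.length := SimpleGraph.Walk.length_edges c
    rw [h] at this
    simp at this
    omega
  obtain ⟨e, he⟩ := List.exists_mem_of_ne_nil _ hlen
  induction e with
  | _ v w =>
    have hh := (SimpleGraph.adj_and_reachable_delete_edges_iff_exists_cycle).2 ⟨u, c, hc, he⟩
    set G' := G \ fromEdgeSet {s(v, w)} with hG'
    have hconn' : G'.Connected := by
      haveI : Nonempty V := hconn.nonempty
      refine SimpleGraph.Connected.mk fun a b => ?_
      obtain ⟨p⟩ := hconn a b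
      exact aux_reach_del hh.2 p
    haveI : Fintype G'.edgeSet := Fintype.ofFinite _
    have h1 : Fintype.card V ≤ G'.edgeFinset.card + 1 := aux_connected_card_le hconn'
    have h2 : G'.edgeFinset ⊂ G.edgeFinset := by
      refine ⟨?_, ?_⟩
      · intro x hx
        rw [SimpleGraph.mem_edgeFinset] at hx ⊢
        exact SimpleGraph.edgeSet_mono (sdiff_le) hx
      · intro hsub
        have hmem : s(v, w) ∈ G.edgeFinset := SimpleGraph.mem_edgeFinset.2 hh.1
        have := hsub hmem
        rw [SimpleGraph.mem_edgeFinset, SimpleGraph.mem_edgeSet, hG', SimpleGraph.sdiff_adj,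
          SimpleGraph.fromEdgeSet_adj] at this
        exact this.2 ⟨rfl, hh.1.ne⟩
    have := Finset.card_lt_card h2
    omega

lemma aux_edge_bound (B : Finset (ℕ × ℕ)) {n k : ℕ}
    [DecidableRel (connectionGraph B).Adj]
    (hk : (B.filter (fun c => ∀ x ∈ B, x.1 = c.1 → x.2 ≤ c.2)).card = k)
    (hn : (B.filter (fun c => ∀ x ∈ B, x.2 = c.2 → x.1 ≤ c.1)).card = n) :
    (connectionGraph B).edgeFinset.card ≤ (B.card - k) + (B.card - n) := by
  classical
  have hdart : Fintype.card (connectionGraph B).Dart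
      = 2 * (connectionGraph B).edgeFinset.card :=
    SimpleGraph.dart_card_eq_twice_card_edges _
  set nRM : Finset (ℕ × ℕ) := B.filter (fun c => ¬ ∀ x ∈ B, x.1 = c.1 → x.2 ≤ c.2) with hnRM
  set nCM : Finset (ℕ × ℕ) := B.filter (fun c => ¬ ∀ x ∈ B, x.2 = c.2 → x.1 ≤ c.1) with hnCM
  have hcard1 : nRM.card = B.card - k := by
    have := Finset.card_filter_add_card_filter_not
      (s := B) (p := fun c => ∀ x ∈ B, x.1 = c.1 → x.2 ≤ c.2)
    rw [← hnRM] at this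
    omega
  have hcard2 : nCM.card = B.card - n := by
    have := Finset.card_filter_add_card_filter_not
      (s := B) (p := fun c => ∀ x ∈ B, x.2 = c.2 → x.1 ≤ c.1)
    rw [← hnCM] at this
    omega
  set TF : Finset (((ℕ × ℕ) × Bool) × Bool) :=
    ((nRM ×ˢ ({true} : Finset Bool)) ∪ (nCM ×ˢ ({false} : Finset Bool))) ×ˢ
      (Finset.univ : Finset Bool) with hTF
  have hTFcard : TF.card = ((B.card - k) + (B.card - n)) * 2 := by
    rw [hTF, Finset.card_product]
    have hdisj : Disjoint (nRM ×ˢ ({true} : Finset Bool)) (nCM ×ˢ ({false} : Finset Bool)) := by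
      rw [Finset.disjoint_left]
      rintro ⟨c, s⟩ h1 h2
      rcases Finset.mem_product.1 h1 with ⟨-, hs1⟩
      rcases Finset.mem_product.1 h2 with ⟨-, hs2⟩
      simp at hs1 hs2
      rw [hs1] at hs2
      exact Bool.noConfusion hs2
    rw [Finset.card_union_of_disjoint hdisj, Finset.card_product, Finset.card_product]
    simp [hcard1, hcard2]
  set F : (connectionGraph B).Dart → (((ℕ × ℕ) × Bool) × Bool) := fun d =>
    if d.fst.1.1 = d.snd.1.1 then
      ((if d.fst.1.2 ≤ d.snd.1.2 then d.fst.1 else d.snd.1, true), decide (d.fst.1.2 ≤ d.snd.1.2))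
    else
      ((if d.fst.1.1 ≤ d.snd.1.1 then d.fst.1 else d.snd.1, false), decide (d.fst.1.1 ≤ d.snd.1.1))
    with hF
  have hFrow : ∀ d : (connectionGraph B).Dart, d.fst.1.1 = d.snd.1.1 →
      F d = ((if d.fst.1.2 ≤ d.snd.1.2 then d.fst.1 else d.snd.1, true),
        decide (d.fst.1.2 ≤ d.snd.1.2)) := by
    intro d hr
    simp only [hF]
    exact if_pos hr
  have hFcol : ∀ d : (connectionGraph B).Dart, ¬ d.fst.1.1 = d.snd.1.1 →
      F d = ((if d.fst.1.1 ≤ d.snd.1.1 then d.fst.1 else d.snd.1, false),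
        decide (d.fst.1.1 ≤ d.snd.1.1)) := by
    intro d hr
    simp only [hF]
    exact if_neg hr
  have hrowcase : ∀ d : (connectionGraph B).Dart,
      d.fst.1.1 = d.snd.1.1 → d.fst.1.2 ≠ d.snd.1.2 := by
    intro d hr hc
    have := ((aux_adj_iff d.fst d.snd).1 d.adj).1
    exact this (Subtype.ext (Prod.ext hr hc))
  have hcolcase : ∀ d : (connectionGraph B).Dart,
      ¬ d.fst.1.1 = d.snd.1.1 → d.fst.1.2 = d.snd.1.2 := by
    intro d hr
    rcases ((aux_adj_iff d.fst d.snd).1 d.adj).2 with ⟨h, -⟩ | ⟨h, -⟩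
    · exact absurd h hr
    · exact h
  have hmem : ∀ d : (connectionGraph B).Dart, F d ∈ TF := by
    intro d
    rw [hTF, Finset.mem_product]
    refine ⟨?_, Finset.mem_univ _⟩
    by_cases hr : d.fst.1.1 = d.snd.1.1
    · have hne := hrowcase d hr
      rw [hFrow d hr]
      apply Finset.mem_union_left
      rw [Finset.mem_product, Finset.mem_singleton]
      refine ⟨?_, rfl⟩
      show (if d.fst.1.2 ≤ d.snd.1.2 then d.fst.1 else d.snd.1) ∈ nRM
      by_cases hle : d.fst.1.2 ≤ d.snd.1.2
      · rw [if_pos hle]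
        refine Finset.mem_filter.2 ⟨d.fst.2, fun hall => ?_⟩
        have := hall d.snd.1 d.snd.2 hr.symm
        omega
      · rw [if_neg hle]
        refine Finset.mem_filter.2 ⟨d.snd.2, fun hall => ?_⟩
        have := hall d.fst.1 d.fst.2 hr
        omega
    · have hc := hcolcase d hr
      rw [hFcol d hr]
      apply Finset.mem_union_right
      rw [Finset.mem_product, Finset.mem_singleton]
      refine ⟨?_, rfl⟩
      show (if d.fst.1.1 ≤ d.snd.1.1 then d.fst.1 else d.snd.1) ∈ nCM
      by_cases hle : d.fst.1.1 ≤ d.snd.1.1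
      · rw [if_pos hle]
        refine Finset.mem_filter.2 ⟨d.fst.2, fun hall => ?_⟩
        have := hall d.snd.1 d.snd.2 hc.symm
        omega
      · rw [if_neg hle]
        refine Finset.mem_filter.2 ⟨d.snd.2, fun hall => ?_⟩
        have := hall d.fst.1 d.fst.2 hc
        omega
  have hinj : Function.Injective F := by
    intro d d' he
    by_cases hr : d.fst.1.1 = d.snd.1.1 <;> by_cases hr' : d'.fst.1.1 = d'.snd.1.1
    · rw [hFrow d hr, hFrow d' hr'] at he
      have hne := hrowcase d hr
      have hne' := hrowcase d' hr'
      have hbool : (d.fst.1.2 ≤ d.snd.1.2) ↔ (d'.fst.1.2 ≤ d'.snd.1.2) := by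
        have := congrArg Prod.snd he
        simpa [decide_eq_decide] using this
      have hcell := congrArg (fun x => x.1.1) he
      simp only at hcell
      by_cases hle : d.fst.1.2 ≤ d.snd.1.2
      · have hle' : d'.fst.1.2 ≤ d'.snd.1.2 := hbool.1 hle
        rw [if_pos hle, if_pos hle'] at hcell
        have hfst : d.fst = d'.fst := Subtype.ext hcell
        have hsnd : d.snd = d'.snd := by
          refine aux_row_succ_unique d.adj ?_ hr (by rw [hfst]; exact hr') (by omega) ?_
          · rw [hfst]; exact d'.adj
          · rw [hfst]; omega
        exact SimpleGraph.Dart.ext _ _ (Prod.ext hfst hsnd)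
      · have hle' : ¬ d'.fst.1.2 ≤ d'.snd.1.2 := fun h => hle (hbool.2 h)
        rw [if_neg hle, if_neg hle'] at hcell
        have hsnd : d.snd = d'.snd := Subtype.ext hcell
        have hfst : d.fst = d'.fst := by
          refine aux_row_succ_unique d.adj.symm ?_ hr.symm (by rw [hsnd]; exact hr'.symm)
            (by omega) ?_
          · rw [hsnd]; exact d'.adj.symm
          · rw [hsnd]; omega
        exact SimpleGraph.Dart.ext _ _ (Prod.ext hfst hsnd)
    · rw [hFrow d hr, hFcol d' hr'] at he
      have := congrArg (fun x => x.1.2) he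
      simp at this
    · rw [hFcol d hr, hFrow d' hr'] at he
      have := congrArg (fun x => x.1.2) he
      simp at this
    · rw [hFcol d hr, hFcol d' hr'] at he
      have hc := hcolcase d hr
      have hc' := hcolcase d' hr'
      have hne : d.fst.1.1 ≠ d.snd.1.1 := hr
      have hne' : d'.fst.1.1 ≠ d'.snd.1.1 := hr'
      have hbool : (d.fst.1.1 ≤ d.snd.1.1) ↔ (d'.fst.1.1 ≤ d'.snd.1.1) := by
        have := congrArg Prod.snd he
        simpa [decide_eq_decide] using this
      have hcell := congrArg (fun x => x.1.1) he
      simp only at hcell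
      by_cases hle : d.fst.1.1 ≤ d.snd.1.1
      · have hle' : d'.fst.1.1 ≤ d'.snd.1.1 := hbool.1 hle
        rw [if_pos hle, if_pos hle'] at hcell
        have hfst : d.fst = d'.fst := Subtype.ext hcell
        have hsnd : d.snd = d'.snd := by
          refine aux_col_succ_unique d.adj ?_ hc (by rw [hfst]; exact hc') (by omega) ?_
          · rw [hfst]; exact d'.adj
          · rw [hfst]; omega
        exact SimpleGraph.Dart.ext _ _ (Prod.ext hfst hsnd)
      · have hle' : ¬ d'.fst.1.1 ≤ d'.snd.1.1 := fun h => hle (hbool.2 h)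
        rw [if_neg hle, if_neg hle'] at hcell
        have hsnd : d.snd = d'.snd := Subtype.ext hcell
        have hfst : d.fst = d'.fst := by
          refine aux_col_succ_unique d.adj.symm ?_ hc.symm (by rw [hsnd]; exact hc'.symm)
            (by omega) ?_
          · rw [hsnd]; exact d'.adj.symm
          · rw [hsnd]; omega
        exact SimpleGraph.Dart.ext _ _ (Prod.ext hfst hsnd)
  have hcardle : Fintype.card (connectionGraph B).Dart ≤ TF.card := by
    have := Finset.card_le_card_of_injOn (s := (Finset.univ : Finset (connectionGraph B).Dart))
      (t := TF) F (fun d _ => hmem d) hinj.injOn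
    simpa [Finset.card_univ] using this
  omega

lemma aux_reach_row_aux {B : Finset (ℕ × ℕ)} (N : ℕ) :
    ∀ (a b : {x // x ∈ B}), a.1.1 = b.1.1 → a.1.2 ≤ b.1.2 → b.1.2 - a.1.2 ≤ N →
      (connectionGraph B).Reachable a b := by
  induction N with
  | zero =>
    intro a b h1 h2 h3
    have : a = b := Subtype.ext (Prod.ext h1 (by omega))
    rw [this]
  | succ N ih =>
    intro a b h1 h2 h3
    by_cases heq : a.1.2 = b.1.2
    · have : a = b := Subtype.ext (Prod.ext h1 heq)
      rw [this]
    · have hlt : a.1.2 < b.1.2 := lt_of_le_of_ne h2 heq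
      classical
      set s := B.filter (fun x => x.1 = a.1.1 ∧ a.1.2 < x.2 ∧ x.2 ≤ b.1.2) with hs
      have hbs : b.1 ∈ s :=
        Finset.mem_filter.2 ⟨b.2, h1.symm, hlt, le_refl _⟩
      obtain ⟨m, hm, hmin⟩ := Finset.exists_min_image s Prod.snd ⟨b.1, hbs⟩
      rcases Finset.mem_filter.1 hm with ⟨hmB, hmrow, hmlt, hmle⟩
      have hadj : (connectionGraph B).Adj a ⟨m, hmB⟩ := by
        rw [aux_adj_iff]
        refine ⟨fun h => ?_, Or.inl ⟨hmrow.symm, fun x hx hxr hcon => ?_⟩⟩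
        · have : a.1.2 = m.2 := congrArg (fun z : {x // x ∈ B} => z.1.2) h
          omega
        · rw [Nat.min_eq_left hmlt.le, Nat.max_eq_right hmlt.le] at hcon
          have hxs : x ∈ s := Finset.mem_filter.2 ⟨hx, hxr, by omega, by omega⟩
          have := hmin x hxs
          omega
      refine hadj.reachable.trans (ih ⟨m, hmB⟩ b ?_ ?_ ?_)
      · show m.1 = b.1.1
        rw [hmrow, h1]
      · show m.2 ≤ b.1.2
        exact hmle
      · show b.1.2 - m.2 ≤ N
        omega

lemma aux_reach_row {B : Finset (ℕ × ℕ)} (a b : {x // x ∈ B}) (h : a.1.1 = b.1.1) :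
    (connectionGraph B).Reachable a b := by
  rcases le_total a.1.2 b.1.2 with hle | hle
  · exact aux_reach_row_aux (b.1.2 - a.1.2) a b h hle (le_refl _)
  · exact (aux_reach_row_aux (a.1.2 - b.1.2) b a h.symm hle (le_refl _)).symm

lemma aux_reach_col_aux {B : Finset (ℕ × ℕ)} (N : ℕ) :
    ∀ (a b : {x // x ∈ B}), a.1.2 = b.1.2 → a.1.1 ≤ b.1.1 → b.1.1 - a.1.1 ≤ N →
      (connectionGraph B).Reachable a b := by
  induction N with
  | zero =>
    intro a b h1 h2 h3
    have : a = b := Subtype.ext (Prod.ext (by omega) h1)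
    rw [this]
  | succ N ih =>
    intro a b h1 h2 h3
    by_cases heq : a.1.1 = b.1.1
    · have : a = b := Subtype.ext (Prod.ext heq h1)
      rw [this]
    · have hlt : a.1.1 < b.1.1 := lt_of_le_of_ne h2 heq
      classical
      set s := B.filter (fun x => x.2 = a.1.2 ∧ a.1.1 < x.1 ∧ x.1 ≤ b.1.1) with hs
      have hbs : b.1 ∈ s :=
        Finset.mem_filter.2 ⟨b.2, h1.symm, hlt, le_refl _⟩
      obtain ⟨m, hm, hmin⟩ := Finset.exists_min_image s Prod.fst ⟨b.1, hbs⟩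
      rcases Finset.mem_filter.1 hm with ⟨hmB, hmcol, hmlt, hmle⟩
      have hadj : (connectionGraph B).Adj a ⟨m, hmB⟩ := by
        rw [aux_adj_iff]
        refine ⟨fun h => ?_, Or.inr ⟨hmcol.symm, fun x hx hxr hcon => ?_⟩⟩
        · have : a.1.1 = m.1 := congrArg (fun z : {x // x ∈ B} => z.1.1) h
          omega
        · rw [Nat.min_eq_left hmlt.le, Nat.max_eq_right hmlt.le] at hcon
          have hxs : x ∈ s := Finset.mem_filter.2 ⟨hx, hxr, by omega, by omega⟩
          have := hmin x hxs
          omega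
      refine hadj.reachable.trans (ih ⟨m, hmB⟩ b ?_ ?_ ?_)
      · show m.2 = b.1.2
        rw [hmcol, h1]
      · show m.1 ≤ b.1.1
        exact hmle
      · show b.1.1 - m.1 ≤ N
        omega

lemma aux_reach_col {B : Finset (ℕ × ℕ)} (a b : {x // x ∈ B}) (h : a.1.2 = b.1.2) :
    (connectionGraph B).Reachable a b := by
  rcases le_total a.1.1 b.1.1 with hle | hle
  · exact aux_reach_col_aux (b.1.1 - a.1.1) a b h hle (le_refl _)
  · exact (aux_reach_col_aux (a.1.1 - b.1.1) b a h.symm hle (le_refl _)).symm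

/-- if the connection graph of the block pattern `B` contains a cycle
(is not acyclic), then some filling of `B` occurs nowhere in the grid `T(i,j) = S(j) + Q(i)`. -/
theorem cyclic_pattern_missing_filling
    (G : Type*) [AddCommGroup G] [Fintype G] (d n k : ℕ)
    (hcardG : Fintype.card G = d) (hd : 2 ≤ d) (hn : 1 ≤ n) (hk : 1 ≤ k)
    (p : Fin n → ℕ) (q : Fin k → ℕ) (hp : IsComb n p) (hq : IsComb k q)
    (S : ZMod (d ^ n) → G)
    (hS : Function.Bijective
      (fun i : ZMod (d ^ n) => fun t : Fin n => S (i + (p t : ZMod (d ^ n)))))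
    (Q : ZMod (d ^ (k - 1)) → G)
    (hQ : ∀ w : Fin k → G, ∃! i : ZMod (d ^ (k - 1)),
      ∃ g : G, ∀ t : Fin k, Q (i + (q t : ZMod (d ^ (k - 1)))) = w t + g)
    (B : Finset (ℕ × ℕ)) (hcard : B.card = n + k - 1)
    (hcols : B.image Prod.snd = Finset.image (fun t => p t) Finset.univ)
    (hrows : B.image Prod.fst = Finset.image (fun t => q t) Finset.univ)
    (hcycle : ¬ (connectionGraph B).IsAcyclic)
    (T : ZMod (d ^ (k - 1)) × ZMod (d ^ n) → G)
    (hT : ∀ i j, T (i, j) = S j + Q i) :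
    ∃ f : ℕ × ℕ → G, ∀ ij : ZMod (d ^ (k - 1)) × ZMod (d ^ n),
      ¬ ∀ rc ∈ B, T (ij.1 + (rc.1 : ZMod (d ^ (k - 1))), ij.2 + (rc.2 : ZMod (d ^ n))) = f rc := by
  classical
  haveI : NeZero (d ^ n) := ⟨pow_ne_zero _ (by omega)⟩
  haveI : NeZero (d ^ (k - 1)) := ⟨pow_ne_zero _ (by omega)⟩
  have hBne : B.Nonempty := Finset.card_pos.1 (by omega)
  haveI : DecidableRel (connectionGraph B).Adj := Classical.decRel _
  have hkrows : (B.image Prod.fst).card = k := by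
    rw [hrows, Finset.card_image_of_injective _ hq.1.injective, Finset.card_univ,
      Fintype.card_fin]
  have hncols : (B.image Prod.snd).card = n := by
    rw [hcols, Finset.card_image_of_injective _ hp.1.injective, Finset.card_univ,
      Fintype.card_fin]
  -- Step 1 : the connection graph is not connected
  have hnconn : ¬ (connectionGraph B).Connected := by
    intro hconn
    rw [SimpleGraph.IsAcyclic] at hcycle
    push_neg at hcycle
    obtain ⟨v, c, hc⟩ := hcycle
    have h1 := aux_card_le_of_cycle hconn hc
    have hfk : (B.filter (fun c => ∀ x ∈ B, x.1 = c.1 → x.2 ≤ c.2)).card = k := by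
      rw [aux_card_rowmax, hkrows]
    have hfn : (B.filter (fun c => ∀ x ∈ B, x.2 = c.2 → x.1 ≤ c.1)).card = n := by
      rw [aux_card_colmax, hncols]
    have h2 := aux_edge_bound B hfk hfn
    have hV : Fintype.card {x // x ∈ B} = B.card := Fintype.card_coe B
    omega
  have hnpre : ¬ (connectionGraph B).Preconnected := by
    intro h
    haveI : Nonempty {x // x ∈ B} := ⟨⟨hBne.choose, hBne.choose_spec⟩⟩
    exact hnconn (SimpleGraph.Connected.mk h)
  rw [SimpleGraph.Preconnected] at hnpre
  push_neg at hnpre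
  obtain ⟨a, b, hab⟩ := hnpre
  -- Step 2 : the partition
  set R1 : ℕ → Prop := fun r =>
    ∃ u : {x // x ∈ B}, (connectionGraph B).Reachable a u ∧ u.1.1 = r with hR1
  set C1 : ℕ → Prop := fun c =>
    ∃ u : {x // x ∈ B}, (connectionGraph B).Reachable a u ∧ u.1.2 = c with hC1
  have keyRC : ∀ rc : ℕ × ℕ, rc ∈ B → (R1 rc.1 ↔ C1 rc.2) := by
    intro rc h
    constructor
    · rintro ⟨u, hu, hur⟩
      exact ⟨⟨rc, h⟩, hu.trans (aux_reach_row u ⟨rc, h⟩ hur), rfl⟩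
    · rintro ⟨u, hu, huc⟩
      exact ⟨⟨rc, h⟩, hu.trans (aux_reach_col u ⟨rc, h⟩ huc), rfl⟩
  have hC1a : C1 a.1.2 := ⟨a, SimpleGraph.Reachable.refl a, rfl⟩
  have hC1b : ¬ C1 b.1.2 := by
    rintro ⟨u, hu, huc⟩
    exact hab (hu.trans (aux_reach_col u b huc))
  -- Step 3 : the algebraic construction
  obtain ⟨g, hg⟩ : ∃ g : G, g ≠ 0 :=
    Fintype.exists_ne_of_one_lt_card (by omega) 0
  set w : Fin k → G := fun t =>
    Q ((q t : ZMod (d ^ (k - 1)))) + (if R1 (q t) then 0 else -g) with hw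
  obtain ⟨i', hi'⟩ := (hQ w).exists
  obtain ⟨g0, hg0⟩ := hi'
  set u' : Fin n → G := fun t =>
    S ((p t : ZMod (d ^ n))) + (if C1 (p t) then 0 else g) - g0 with hu'
  obtain ⟨j', hj'⟩ := hS.2 u'
  have hj'' : ∀ t, S (j' + (p t : ZMod (d ^ n))) = u' t := fun t => congrFun hj' t
  set Ψ : (ZMod (d ^ (k - 1)) × ZMod (d ^ n)) → ({x // x ∈ B} → G) := fun ij u =>
    S (ij.2 + (u.1.2 : ZMod (d ^ n))) + Q (ij.1 + (u.1.1 : ZMod (d ^ (k - 1)))) with hΨ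
  have hΨeq : Ψ (i', j') = Ψ (0, 0) := by
    funext u
    obtain ⟨t, -, hqt⟩ := Finset.mem_image.1
      (hrows ▸ Finset.mem_image_of_mem Prod.fst u.2)
    obtain ⟨s, -, hps⟩ := Finset.mem_image.1
      (hcols ▸ Finset.mem_image_of_mem Prod.snd u.2)
    have hiff : R1 u.1.1 ↔ C1 u.1.2 := keyRC u.1 u.2
    rw [hΨ]
    simp only [zero_add]
    rw [← hqt, ← hps, hj'' s, hg0 t, hu', hw]
    simp only
    by_cases hR : R1 (q t)
    · have hC : C1 (p s) := by rw [hps]; rw [hqt] at hR; exact hiff.1 hR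
      rw [if_pos hR, if_pos hC]
      abel
    · have hC : ¬ C1 (p s) := by rw [hps]; rw [hqt] at hR; exact fun h => hR (hiff.2 h)
      rw [if_neg hR, if_neg hC]
      abel
  have hne0 : (i', j') ≠ ((0 : ZMod (d ^ (k - 1))), (0 : ZMod (d ^ n))) := by
    intro h
    have hj0 : j' = 0 := congrArg Prod.snd h
    obtain ⟨s1, -, hs1⟩ := Finset.mem_image.1
      (hcols ▸ Finset.mem_image_of_mem Prod.snd a.2)
    obtain ⟨s2, -, hs2⟩ := Finset.mem_image.1
      (hcols ▸ Finset.mem_image_of_mem Prod.snd b.2)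
    have e1 := hj'' s1
    have e2 := hj'' s2
    rw [hj0, zero_add, hu'] at e1 e2
    simp only at e1 e2
    rw [if_pos (by rw [hs1]; exact hC1a)] at e1
    rw [if_neg (by rw [hs2]; exact hC1b)] at e2
    rw [add_zero] at e1
    have hg0z : g0 = 0 := sub_eq_self.1 e1.symm
    rw [hg0z, sub_zero] at e2
    exact hg (left_eq_add.1 e2)
  have hcards : Fintype.card (ZMod (d ^ (k - 1)) × ZMod (d ^ n))
      = Fintype.card ({x // x ∈ B} → G) := by
    rw [Fintype.card_prod, ZMod.card, ZMod.card, Fintype.card_fun, Fintype.card_coe, hcard,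
      hcardG, ← pow_add]
    congr 1
    omega
  have hΨnotsurj : ¬ Function.Surjective Ψ := by
    intro hsurj
    have hbij : Function.Bijective Ψ :=
      (Fintype.bijective_iff_surjective_and_card Ψ).2 ⟨hsurj, hcards⟩
    exact hne0 (hbij.1 hΨeq)
  rw [Function.Surjective] at hΨnotsurj
  push_neg at hΨnotsurj
  obtain ⟨f0, hf0⟩ := hΨnotsurj
  refine ⟨fun rc => if h : rc ∈ B then f0 ⟨rc, h⟩ else 0, fun ij hall => ?_⟩
  apply hf0 ij
  funext u
  have h1 := hall u.1 u.2
  rw [hT] at h1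
  rw [hΨ]
  simp only
  rw [h1]
  show (if h : u.1 ∈ B then f0 ⟨u.1, h⟩ else 0) = f0 u
  rw [dif_pos u.2]
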